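/- Let k ≥ 2 and let C₀ = { (λ_F, λ_B; δ_1, …, δ_k) ∈ ℝ_{>0}^{2+k} : λ_F > δ_i for all i, and λ_F·λ_B − (1/2)·∑ δ_i² > 0 }. If v ∈ C₀ and defect(v) = δ_1 + δ_2 − λ_F > 0, then cremona(v) ∈ C₀. -/

import Mathlib

/-- If `v` lies in the standard symplectic cone `C₀` (all entries positive,
`lamF > δᵢ` for all `i`, positive volume) and `defect(v) = δ₁ + δ₂ − lamF > 0`,
then `cremona(v)` also lies in `C₀`. -/
theorem cremona_preserves_cone (k : ℕ) (hk : 2 ≤ k) (lamF lamB : ℝ) (δ : ℕ → ℝ)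
    (hF : 0 < lamF) (hB : 0 < lamB)
    (hδ : ∀ i ∈ Finset.Icc 1 k, 0 < δ i)
    (hFδ : ∀ i ∈ Finset.Icc 1 k, δ i < lamF)
    (hvol : 0 < lamF * lamB - (1/2) * ∑ i ∈ Finset.Icc 1 k, (δ i)^2)
    (hdef : 0 < δ 1 + δ 2 - lamF) :
    let δ' : ℕ → ℝ := fun i => if i = 1 then lamF - δ 2 else if i = 2 then lamF - δ 1 else δ i
    let lamB' : ℝ := lamB - (δ 1 + δ 2 - lamF)
    0 < lamF ∧ 0 < lamB' ∧ (∀ i ∈ Finset.Icc 1 k, 0 < δ' i) ∧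
      (∀ i ∈ Finset.Icc 1 k, δ' i < lamF) ∧
      0 < lamF * lamB' - (1/2) * ∑ i ∈ Finset.Icc 1 k, (δ' i)^2 := by
  intro δ' lamB'
  have h1k : (1 : ℕ) ∈ Finset.Icc 1 k := by simp [Finset.mem_Icc]; omega
  have h2k : (2 : ℕ) ∈ Finset.Icc 1 k := by simp [Finset.mem_Icc]; omega
  have hδ1 := hδ 1 h1k
  have hδ2 := hδ 2 h2k
  have hFδ1 := hFδ 1 h1k
  have hFδ2 := hFδ 2 h2k
  -- decompose the index set
  have hset : Finset.Icc 1 k = insert 1 (insert 2 (Finset.Icc 3 k)) := by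
    ext i; simp [Finset.mem_Icc, Finset.mem_insert]; omega
  have hn1 : (1 : ℕ) ∉ insert 2 (Finset.Icc 3 k) := by
    simp [Finset.mem_Icc]
  have hn2 : (2 : ℕ) ∉ Finset.Icc 3 k := by simp
  have hsum : ∀ f : ℕ → ℝ, ∑ i ∈ Finset.Icc 1 k, f i
      = f 1 + f 2 + ∑ i ∈ Finset.Icc 3 k, f i := by
    intro f
    rw [hset, Finset.sum_insert hn1, Finset.sum_insert hn2]
    ring
  have htail : ∑ i ∈ Finset.Icc 3 k, (δ' i)^2 = ∑ i ∈ Finset.Icc 3 k, (δ i)^2 := by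
    apply Finset.sum_congr rfl
    intro i hi
    have : i ≠ 1 ∧ i ≠ 2 := by
      simp [Finset.mem_Icc] at hi; omega
    simp [δ', this.1, this.2]
  have hS : ∑ i ∈ Finset.Icc 1 k, (δ' i)^2
      = ∑ i ∈ Finset.Icc 1 k, (δ i)^2 + (lamF - δ 2)^2 - δ 1 ^ 2 + (lamF - δ 1)^2 - δ 2 ^ 2 := by
    rw [hsum (fun i => (δ' i)^2), hsum (fun i => (δ i)^2), htail]
    simp [δ']
    ring
  have hvol' : 0 < lamF * lamB' - (1/2) * ∑ i ∈ Finset.Icc 1 k, (δ' i)^2 := by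
    rw [hS]
    have : lamF * lamB' = lamF * lamB - lamF * (δ 1 + δ 2 - lamF) := by
      simp [lamB']; ring
    nlinarith [hvol]
  refine ⟨hF, ?_, ?_, ?_, hvol'⟩
  · have htailpos : 0 ≤ ∑ i ∈ Finset.Icc 3 k, (δ i)^2 :=
      Finset.sum_nonneg (fun i _ => sq_nonneg _)
    have hsq : 0 < ∑ i ∈ Finset.Icc 1 k, (δ' i)^2 := by
      rw [hS, hsum (fun i => (δ i)^2)]
      nlinarith [sq_nonneg (lamF - δ 1), mul_pos (sub_pos.2 hFδ2) (sub_pos.2 hFδ2)]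
    by_contra h
    push_neg at h
    have hmul : lamF * (lamB - (δ 1 + δ 2 - lamF)) ≤ 0 :=
      mul_nonpos_of_nonneg_of_nonpos hF.le h
    have hvol'' : 0 < lamF * (lamB - (δ 1 + δ 2 - lamF))
        - (1/2) * ∑ i ∈ Finset.Icc 1 k, (δ' i)^2 := hvol'
    linarith
  · intro i hi
    by_cases h1 : i = 1
    · simp [δ', h1]; linarith
    by_cases h2 : i = 2
    · simp [δ', h1, h2]; linarith
    · simpa [δ', h1, h2] using hδ i hi
  · intro i hi
    by_cases h1 : i = 1
    · simp [δ', h1]; linarith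
    by_cases h2 : i = 2
    · simp [δ', h1, h2]; linarith
    · simpa [δ', h1, h2] using hFδ i hi
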